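/- Let 𝒩 be a nonempty set, k a commutative ring, and M a symmetral k-valued mould. Define the mould M̃ by M̃^∅ = 1 and M̃^{n₁⋯n_r} = (−1)^r M^{n_r⋯n₁} (sign times the value on the reversed word). Then M × M̃ = M̃ × M = 𝟙; that is, M̃ is the multiplicative inverse of M in the mould algebra. -/

import Mathlib

open scoped Classical

/-- Shuffle coefficient: the number of ways the word `n` can be obtained by interleaving
the letters of `a` and `b` while preserving their internal orders. -/
noncomputable def sh {𝒩 : Type*} : List 𝒩 → List 𝒩 → List 𝒩 → ℕ
  | [], b, n => if b = n then 1 else 0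
  | a, [], n => if a = n then 1 else 0
  | _ :: _, _ :: _, [] => 0
  | x :: a, y :: b, z :: n =>
      (if x = z then sh a (y :: b) n else 0) + (if y = z then sh (x :: a) b n else 0)

/-- Mould multiplication: `(M × N)^n = ∑_{n = a b} M^a N^b`. -/
noncomputable def mmul {𝒩 A : Type*} [Semiring A] (M N : List 𝒩 → A) : List 𝒩 → A :=
  fun n => ∑ i ∈ Finset.range (n.length + 1), M (n.take i) * N (n.drop i)

/-- The unit mould `𝟙`. -/
noncomputable def munit {𝒩 A : Type*} [Semiring A] : List 𝒩 → A :=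
  fun n => if n = [] then 1 else 0

/-- Powers of a mould for mould multiplication. -/
noncomputable def mpow {𝒩 A : Type*} [Semiring A] (M : List 𝒩 → A) : ℕ → (List 𝒩 → A)
  | 0 => munit
  | j + 1 => mmul M (mpow M j)

/-- A mould `M` is symmetral if `M^∅ = 1` and
`∑_n sh^{a,b}_n M^n = M^a M^b` for all nonempty words `a`, `b`. -/
def Symmetral {𝒩 A : Type*} [CommSemiring A] (M : List 𝒩 → A) : Prop :=
  M [] = 1 ∧ ∀ a b : List 𝒩, a ≠ [] → b ≠ [] →
    (∑ᶠ n : List 𝒩, (sh a b n : A) * M n) = M a * M b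

/-- A mould `M` is alternal if `M^∅ = 0` and
`∑_n sh^{a,b}_n M^n = 0` for all nonempty words `a`, `b`. -/
def Alternal {𝒩 A : Type*} [CommSemiring A] (M : List 𝒩 → A) : Prop :=
  M [] = 0 ∧ ∀ a b : List 𝒩, a ≠ [] → b ≠ [] →
    (∑ᶠ n : List 𝒩, (sh a b n : A) * M n) = 0

section ShLemmas
variable {𝒩 : Type*}

lemma sh_nil_left (b m : List 𝒩) : sh [] b m = if b = m then 1 else 0 := by
  cases b <;> simp [sh]

lemma sh_nil_right (a m : List 𝒩) : sh a [] m = if a = m then 1 else 0 := by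
  cases a <;> simp [sh]

lemma sh_cons_cons_nil (x y : 𝒩) (a b : List 𝒩) : sh (x :: a) (y :: b) [] = 0 := by simp [sh]

lemma sh_cons_cons_cons (x y z : 𝒩) (a b m : List 𝒩) :
    sh (x :: a) (y :: b) (z :: m) =
      (if x = z then sh a (y :: b) m else 0) + (if y = z then sh (x :: a) b m else 0) := by
  simp [sh]

lemma sh_target_nil (a b : List 𝒩) : sh a b [] = if a = [] ∧ b = [] then 1 else 0 := by
  cases a <;> cases b <;> simp [sh_nil_left, sh_nil_right, sh_cons_cons_nil]

lemma sh_nil_cons_cons (y z : 𝒩) (l m : List 𝒩) :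
    sh [] (y :: l) (z :: m) = if y = z then sh [] l m else 0 := by
  rw [sh_nil_left, sh_nil_left]
  by_cases hy : y = z <;> by_cases hl : l = m <;> simp [hy, hl]

lemma sh_cons_nil_cons (x z : 𝒩) (a m : List 𝒩) :
    sh (x :: a) [] (z :: m) = if x = z then sh a [] m else 0 := by
  rw [sh_nil_right, sh_nil_right]
  by_cases hx : x = z <;> by_cases ha : a = m <;> simp [hx, ha]

lemma sh_cons_rev (x z : 𝒩) (a b m : List 𝒩) :
    sh (x :: a) b.reverse (z :: m) =
      (if x = z then sh a b.reverse m else 0) +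
      (if b.getLast? = some z then sh (x :: a) b.dropLast.reverse m else 0) := by
  rcases b.eq_nil_or_concat' with rfl | ⟨u, y, rfl⟩
  · simp [sh_cons_nil_cons]
  · have h1 : (u ++ [y]).reverse = y :: u.reverse := by simp
    have h2 : (u ++ [y]).getLast? = some y := by simp
    have h3 : (u ++ [y]).dropLast = u := by simp
    rw [h1, h2, h3, sh_cons_cons_cons]
    simp [Option.some_inj]

lemma sh_perm : ∀ (m a b : List 𝒩), sh a b m ≠ 0 → m.Perm (a ++ b) := by
  intro m
  induction m with
  | nil =>
      intro a b h
      rw [sh_target_nil] at h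
      rcases a with _ | _ <;> rcases b with _ | _ <;> simp_all
  | cons z m ih =>
      intro a b h
      match a, b with
      | [], b =>
          rw [sh_nil_left] at h
          have : b = z :: m := by by_contra hb; simp [hb] at h
          simp [this]
      | x :: a, [] =>
          rw [sh_nil_right] at h
          have : x :: a = z :: m := by by_contra hb; simp [hb] at h
          simp [this.symm]
      | x :: a, y :: b =>
          rw [sh_cons_cons_cons] at h
          have h' : (if x = z then sh a (y :: b) m else 0) ≠ 0 ∨
              (if y = z then sh (x :: a) b m else 0) ≠ 0 := by
            by_contra hc; push_neg at hc; omega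
          rcases h' with h' | h'
          · have hx : x = z := by by_contra hx; simp [hx] at h'
            subst hx
            have hm := ih a (y :: b) (by simpa using h')
            simpa using hm.cons x
          · have hy : y = z := by by_contra hy; simp [hy] at h'
            subst hy
            have hm := ih (x :: a) b (by simpa using h')
            exact (hm.cons y).trans List.perm_middle.symm

end ShLemmas

noncomputable def Fd {𝒩 k : Type*} [CommRing k] (n m : List 𝒩) : k :=
  ∑ i ∈ Finset.range (n.length + 1),
    (-1 : k) ^ (n.length - i) * (sh (n.take i) ((n.drop i).reverse) m : k)

section FdLemmas
variable {𝒩 k : Type*} [CommRing k]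

lemma if_sum_pull {c : Prop} [Decidable c] (s : Finset ℕ) (g : ℕ → k) (f : ℕ → k) :
    (∑ i ∈ s, g i * (if c then f i else 0)) = if c then ∑ i ∈ s, g i * f i else 0 := by
  split_ifs <;> simp

lemma Fd_eq : ∀ (m n : List 𝒩),
    (Fd n m : k) = if n = [] then (if m = [] then 1 else 0) else 0 := by
  intro m
  induction m with
  | nil =>
      intro n
      cases n with
      | nil => simp [Fd, sh_target_nil]
      | cons x t =>
          rw [if_neg (List.cons_ne_nil x t)]
          apply Finset.sum_eq_zero
          intro i hi
          rw [sh_target_nil]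
          rcases Nat.eq_zero_or_pos i with rfl | hpos
          · simp
          · have : (x :: t).take i ≠ [] := by
              simp [List.take_eq_nil_iff]; omega
            simp [this]
  | cons z m' ih =>
      intro n
      cases n with
      | nil =>
          simp [Fd, sh_nil_left]
      | cons x t =>
          rw [if_neg (List.cons_ne_nil x t)]
          rcases t.eq_nil_or_concat' with rfl | ⟨u, y, rfl⟩
          · -- n = [x]
            rw [Fd]
            simp only [List.length_cons, List.length_nil]
            rw [Finset.sum_range_succ, Finset.sum_range_one]
            simp [sh_nil_left, sh_nil_right]
            split_ifs <;> ring
          · -- n = x :: (u ++ [y])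
            have hT : (u ++ [y]).length = u.length + 1 := by simp
            have hlen : (x :: (u ++ [y])).length = u.length + 2 := by simp
            rw [Fd, hlen]
            rw [Finset.sum_range_succ']
            -- summand for i+1
            have hstep : ∀ i ∈ Finset.range (u.length + 2),
                (-1 : k) ^ (u.length + 2 - (i + 1)) *
                  (sh ((x :: (u ++ [y])).take (i + 1))
                    (((x :: (u ++ [y])).drop (i + 1)).reverse) (z :: m') : k)
                = (-1 : k) ^ (u.length + 1 - i) *
                    (if x = z then (sh ((u ++ [y]).take i) (((u ++ [y]).drop i).reverse) m' : k) else 0)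
                  + (-1 : k) ^ (u.length + 1 - i) *
                    (if ((u ++ [y]).drop i).getLast? = some z then
                      (sh (x :: (u ++ [y]).take i) ((((u ++ [y]).drop i).dropLast).reverse) m' : k) else 0) := by
              intro i hi
              rw [List.take_succ_cons, List.drop_succ_cons, sh_cons_rev]
              push_cast
              rw [mul_add]
            rw [Finset.sum_congr rfl hstep, Finset.sum_add_distrib]
            -- first sum
            have hS1 : (∑ i ∈ Finset.range (u.length + 2),
                (-1 : k) ^ (u.length + 1 - i) *
                  (if x = z then (sh ((u ++ [y]).take i) (((u ++ [y]).drop i).reverse) m' : k) else 0)) = 0 := by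
              rw [if_sum_pull]
              have : (∑ i ∈ Finset.range (u.length + 2),
                  (-1 : k) ^ (u.length + 1 - i) *
                    (sh ((u ++ [y]).take i) (((u ++ [y]).drop i).reverse) m' : k)) = Fd (u ++ [y]) m' := by
                rw [Fd, hT]
              rw [this, ih]
              simp
            rw [hS1, zero_add]
            -- second sum: peel top index
            rw [Finset.sum_range_succ]
            have htop : (u ++ [y]).drop (u.length + 1) = [] := by
              simp [List.drop_eq_nil_iff]
            rw [htop]
            simp only [List.getLast?_nil]
            simp only [reduceCtorEq, if_false, mul_zero, add_zero]
            have hstep2 : ∀ i ∈ Finset.range (u.length + 1),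
                (-1 : k) ^ (u.length + 1 - i) *
                  (if ((u ++ [y]).drop i).getLast? = some z then
                    (sh (x :: (u ++ [y]).take i) ((((u ++ [y]).drop i).dropLast).reverse) m' : k) else 0)
                = -((-1 : k) ^ (u.length - i) *
                    (if y = z then (sh (x :: u.take i) ((u.drop i).reverse) m' : k) else 0)) := by
              intro i hi
              rw [Finset.mem_range] at hi
              have hiu : i ≤ u.length := by omega
              rw [List.drop_append_of_le_length hiu, List.take_append_of_le_length hiu]
              rw [List.getLast?_concat, List.dropLast_concat]
              have hpow : (-1 : k) ^ (u.length + 1 - i) = -((-1 : k) ^ (u.length - i)) := by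
                rw [show u.length + 1 - i = (u.length - i) + 1 by omega, pow_succ]
                ring
              rw [hpow]
              simp only [Option.some_inj]
              split_ifs <;> ring
            rw [Finset.sum_congr rfl hstep2, Finset.sum_neg_distrib, if_sum_pull]
            have hB : (∑ i ∈ Finset.range (u.length + 1),
                (-1 : k) ^ (u.length - i) * (sh (x :: u.take i) ((u.drop i).reverse) m' : k))
                = (-1 : k) ^ u.length * (sh [] ((x :: u).reverse) m' : k) := by
              have h0 : (Fd (x :: u) m' : k) = 0 := by rw [ih]; simp
              rw [Fd] at h0
              simp only [List.length_cons] at h0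
              rw [Finset.sum_range_succ'] at h0
              have hs : ∀ i ∈ Finset.range (u.length + 1),
                  (-1 : k) ^ (u.length + 1 - (i + 1)) *
                    (sh ((x :: u).take (i + 1)) (((x :: u).drop (i + 1)).reverse) m' : k)
                  = (-1 : k) ^ (u.length - i) * (sh (x :: u.take i) ((u.drop i).reverse) m' : k) := by
                intro i hi
                rw [List.take_succ_cons, List.drop_succ_cons, Nat.succ_sub_succ]
              rw [Finset.sum_congr rfl hs] at h0
              simp only [List.take_zero, List.drop_zero, Nat.sub_zero] at h0
              have hp : (-1 : k) ^ (u.length + 1) = -((-1 : k) ^ u.length) := by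
                rw [pow_succ]; ring
              rw [hp] at h0
              linear_combination h0
            rw [hB]
            have hrev : (x :: (u ++ [y])).reverse = y :: (x :: u).reverse := by simp
            simp only [List.take_nil, List.take_zero, List.drop_zero, Nat.sub_zero, hrev,
              sh_nil_cons_cons]
            push_cast
            split_ifs <;> ring

end FdLemmas

section MouldAlgebra
variable {𝒩 A : Type*} [Semiring A]

lemma munit_mmul (M : List 𝒩 → A) : mmul munit M = M := by
  funext n
  rw [mmul]
  rw [Finset.sum_eq_single_of_mem 0 (by simp)]
  · simp [munit]
  · intro i hi hi0
    have : n.take i ≠ [] := by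
      rw [Finset.mem_range] at hi
      intro h
      have := congrArg List.length h
      simp only [List.length_take, List.length_nil] at this
      omega
    simp [munit, this]

lemma mmul_munit (M : List 𝒩 → A) : mmul M munit = M := by
  funext n
  rw [mmul]
  rw [Finset.sum_eq_single_of_mem n.length (by simp)]
  · simp [munit]
  · intro i hi hi0
    have : n.drop i ≠ [] := by
      rw [Finset.mem_range] at hi
      intro h
      have := congrArg List.length h
      simp only [List.length_drop, List.length_nil] at this
      omega
    simp [munit, this]

lemma mmul_assoc (M N P : List 𝒩 → A) : mmul (mmul M N) P = mmul M (mmul N P) := by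
  funext n
  rw [mmul, mmul]
  have lhs : ∀ j ∈ Finset.range (n.length + 1),
      mmul M N (n.take j) * P (n.drop j)
      = ∑ i ∈ Finset.Ico 0 (j + 1), M (n.take i) * (N ((n.drop i).take (j - i)) * P (n.drop j)) := by
    intro j hj
    rw [Finset.mem_range] at hj
    rw [mmul, Finset.sum_mul]
    rw [show Finset.Ico 0 (j+1) = Finset.range (j+1) by rw [Finset.range_eq_Ico]]
    have hlen : (n.take j).length = j := by
      rw [List.length_take]; omega
    rw [hlen]
    refine Finset.sum_congr rfl ?_
    intro i hi
    rw [Finset.mem_range] at hi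
    rw [List.take_take, min_eq_left (by omega), List.drop_take, mul_assoc]
  rw [Finset.sum_congr rfl lhs]
  rw [show Finset.range (n.length + 1) = Finset.Ico 0 (n.length + 1) by rw [Finset.range_eq_Ico]]
  rw [← Finset.sum_Ico_Ico_comm]
  refine Finset.sum_congr rfl ?_
  intro i hi
  rw [Finset.mem_Ico] at hi
  rw [mmul, Finset.mul_sum]
  have hlen : (n.drop i).length = n.length - i := by rw [List.length_drop]
  rw [hlen, Finset.sum_Ico_eq_sum_range,
    show n.length + 1 - i = (n.length - i) + 1 by omega]
  refine Finset.sum_congr rfl ?_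
  intro l hl
  rw [Nat.add_sub_cancel_left, List.drop_drop]

end MouldAlgebra

noncomputable def rinv {𝒩 A : Type*} [Ring A] (M : List 𝒩 → A) : List 𝒩 → A
  | [] => 1
  | x :: t => -∑ i ∈ Finset.range (t.length + 1), M (x :: t.take i) * rinv M (t.drop i)
  termination_by n => n.length
  decreasing_by
    simp only [List.length_cons, List.length_drop]
    omega

section Rinv
variable {𝒩 A : Type*} [Ring A]

lemma mmul_rinv (M : List 𝒩 → A) (h1 : M [] = 1) : mmul M (rinv M) = munit := by
  funext n
  cases n with
  | nil => simp [mmul, munit, rinv, h1]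
  | cons x t =>
      rw [mmul, munit, if_neg (List.cons_ne_nil x t)]
      simp only [List.length_cons]
      rw [Finset.sum_range_succ']
      have hs : ∀ i ∈ Finset.range (t.length + 1),
          M ((x :: t).take (i + 1)) * rinv M ((x :: t).drop (i + 1))
          = M (x :: t.take i) * rinv M (t.drop i) := by
        intro i _
        rw [List.take_succ_cons, List.drop_succ_cons]
      rw [Finset.sum_congr rfl hs]
      simp only [List.take_zero, List.drop_zero, h1, one_mul]
      rw [show rinv M (x :: t) = -∑ i ∈ Finset.range (t.length + 1),
        M (x :: t.take i) * rinv M (t.drop i) from by rw [rinv]]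
      exact add_neg_cancel _

end Rinv

/-- for a symmetral mould `M`, the mould
`M̃^∅ = 1`, `M̃^{n₁⋯n_r} = (−1)^r M^{n_r⋯n₁}` is its multiplicative inverse. -/
theorem symmetral_inverse_antipode
    {𝒩 k : Type*} [Nonempty 𝒩] [CommRing k]
    (M : List 𝒩 → k) (hM : Symmetral M)
    (Mt : List 𝒩 → k)
    (hMt : Mt = fun n => if n = [] then 1 else (-1 : k) ^ n.length * M n.reverse) :
    mmul M Mt = munit ∧ mmul Mt M = munit := by
  obtain ⟨hM0, hMsh⟩ := hM
  have hMt0 : Mt [] = 1 := by simp [hMt]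
  have hMtval : ∀ l : List 𝒩, Mt l = (-1 : k) ^ l.length * M l.reverse := by
    intro l
    rcases eq_or_ne l [] with rfl | h
    · simp [hMt, hM0]
    · rw [hMt]; simp [h]
  have key : ∀ a b : List 𝒩, M a * M b = ∑ᶠ m : List 𝒩, (sh a b m : k) * M m := by
    intro a b
    rcases eq_or_ne a [] with rfl | ha
    · rw [hM0, one_mul, finsum_eq_single _ b]
      · simp [sh_nil_left]
      · intro x hx
        simp [sh_nil_left, (Ne.symm hx)]
    rcases eq_or_ne b [] with rfl | hb
    · rw [hM0, mul_one, finsum_eq_single _ a]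
      · simp [sh_nil_right]
      · intro x hx
        simp [sh_nil_right, (Ne.symm hx)]
    · exact (hMsh a b ha hb).symm
  have main : mmul M Mt = munit := by
    funext n
    rcases eq_or_ne n [] with rfl | hn
    · simp [mmul, munit, hM0, hMt0]
    · rw [mmul]
      have hmunit : munit n = (0 : k) := by rw [munit, if_neg hn]
      rw [hmunit]
      classical
      set S : Finset (List 𝒩) := n.permutations.toFinset with hS
      have conv : ∀ i ∈ Finset.range (n.length + 1),
          M (n.take i) * Mt (n.drop i)
          = ∑ m ∈ S, (-1 : k) ^ (n.length - i) * ((sh (n.take i) ((n.drop i).reverse) m : k) * M m) := by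
        intro i hi
        rw [Finset.mem_range] at hi
        rw [hMtval, List.length_drop]
        have hkey := key (n.take i) ((n.drop i).reverse)
        have hsub : Function.support
            (fun m => (sh (n.take i) ((n.drop i).reverse) m : k) * M m) ⊆ ↑S := by
          intro m hm
          have hsh : sh (n.take i) ((n.drop i).reverse) m ≠ 0 := by
            intro h0
            apply hm
            simp [h0]
          have hperm := sh_perm m _ _ hsh
          have hpn : (n.take i ++ (n.drop i).reverse).Perm n := by
            refine List.Perm.trans (List.Perm.append_left _ ((n.drop i).reverse_perm)) ?_
            rw [List.take_append_drop]
          simpa [hS, List.mem_toFinset, List.mem_permutations] using hperm.trans hpn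
        rw [finsum_eq_finset_sum_of_support_subset _ hsub] at hkey
        rw [← Finset.mul_sum, ← hkey]
        ring
      rw [Finset.sum_congr rfl conv, Finset.sum_comm]
      apply Finset.sum_eq_zero
      intro m _
      have : (∑ i ∈ Finset.range (n.length + 1),
          (-1 : k) ^ (n.length - i) * ((sh (n.take i) ((n.drop i).reverse) m : k) * M m))
          = Fd n m * M m := by
        rw [Fd, Finset.sum_mul]
        refine Finset.sum_congr rfl ?_
        intro i _
        ring
      rw [this, Fd_eq, if_neg hn, zero_mul]
  refine ⟨main, ?_⟩
  have h2 : mmul Mt (rinv Mt) = munit := mmul_rinv Mt hMt0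
  have hM_eq : M = rinv Mt := by
    calc M = mmul M munit := (mmul_munit M).symm
    _ = mmul M (mmul Mt (rinv Mt)) := by rw [h2]
    _ = mmul (mmul M Mt) (rinv Mt) := (mmul_assoc _ _ _).symm
    _ = mmul munit (rinv Mt) := by rw [main]
    _ = rinv Mt := munit_mmul _
  rw [hM_eq]
  exact h2
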